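/- arXiv:2501.11039 — 3 statements merged into one kernel-verified Lean document; each statement's English description precedes it below -/
import Mathlib

section
/- Let S be a finite set with |S| = B̂ and let B ≤ B̂. Let f, g : S → ℝ be injective functions (no ties among loss values). Let T_f and T_g denote the Top-B subsets of S under f and g respectively, and let N_f be the number of cross-pairs (i, j) with i ∈ T_f and j ∈ S \ T_f whose order is flipped, i.e., such that (f(i) − f(j) < 0 ≤ g(i) − g(j)) or (g(i) − g(j) < 0 ≤ f(i) − f(j)). Then |T_f △ T_g| ≤ 2·N_f, where △ denotes symmetric difference. -/
open Classical

/-- **Lemma 1 (Misranked Subset Quantity).** The number of tasks changing Top-B membership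
between two injective loss functions is at most twice the number of order-flipped cross-pairs. -/
theorem misranked_subset_quantity
    {α : Type*} [DecidableEq α] (S : Finset α) (Bhat B : ℕ)
    (hS : S.card = Bhat) (hB : B ≤ Bhat)
    (f g : α → ℝ) (hf : Set.InjOn f ↑S) (hg : Set.InjOn g ↑S)
    (Tf Tg : Finset α) (hTfS : Tf ⊆ S) (hTgS : Tg ⊆ S)
    (hTfcard : Tf.card = B) (hTgcard : Tg.card = B)
    (hTfTop : ∀ i ∈ Tf, ∀ j ∈ S \ Tf, f j < f i)
    (hTgTop : ∀ i ∈ Tg, ∀ j ∈ S \ Tg, g j < g i)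
    (Nf : ℕ)
    (hNf : Nf = ((Tf ×ˢ (S \ Tf)).filter (fun p =>
        (f p.1 - f p.2 < 0 ∧ 0 ≤ g p.1 - g p.2) ∨
        (g p.1 - g p.2 < 0 ∧ 0 ≤ f p.1 - f p.2))).card) :
    (symmDiff Tf Tg).card ≤ 2 * Nf := by
  classical
  set k := (Tf \ Tg).card with hk
  have hcard2 : (Tg \ Tf).card = k := by
    rw [hk, Finset.card_sdiff_comm (hTfcard.trans hTgcard.symm)]
  -- symmDiff card = 2k
  have hsymm : (symmDiff Tf Tg).card = 2 * k := by
    rw [symmDiff_def, Finset.sup_eq_union, Finset.card_union_of_disjoint]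
    · rw [hcard2]; ring
    · exact disjoint_sdiff_sdiff
  -- product subset
  have hsub : (Tf \ Tg) ×ˢ (Tg \ Tf) ⊆ (Tf ×ˢ (S \ Tf)).filter (fun p =>
        (f p.1 - f p.2 < 0 ∧ 0 ≤ g p.1 - g p.2) ∨
        (g p.1 - g p.2 < 0 ∧ 0 ≤ f p.1 - f p.2)) := by
    intro p hp
    rw [Finset.mem_product] at hp
    obtain ⟨hp1, hp2⟩ := hp
    rw [Finset.mem_sdiff] at hp1 hp2
    have hp2S : p.2 ∈ S \ Tf := Finset.mem_sdiff.mpr ⟨hTgS hp2.1, hp2.2⟩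
    have hp1S : p.1 ∈ S \ Tg := Finset.mem_sdiff.mpr ⟨hTfS hp1.1, hp1.2⟩
    have hflt : f p.2 < f p.1 := hTfTop p.1 hp1.1 p.2 hp2S
    have hglt : g p.1 < g p.2 := hTgTop p.2 hp2.1 p.1 hp1S
    refine Finset.mem_filter.mpr ⟨Finset.mem_product.mpr ⟨hp1.1, hp2S⟩, Or.inr ⟨by linarith, by linarith⟩⟩
  have hNfge : k * k ≤ Nf := by
    rw [hNf]
    calc k * k = ((Tf \ Tg) ×ˢ (Tg \ Tf)).card := by
          rw [Finset.card_product, hcard2]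
      _ ≤ _ := Finset.card_le_card hsub
  have : k ≤ Nf := by nlinarith
  omega
end

section
/- Let S be a finite set with |S| = B̂ and B ≤ B̂, let f : S → ℝ be an injective function, and let g : Ω × S → ℝ be a family of random losses on a probability space (Ω, μ) such that for almost every ω the map g(ω, ·) : S → ℝ is injective. Let T_f be the Top-B subset of S under f, let T_g(ω) be the Top-B subset under g(ω, ·), and let m(ω) = |T_f △ T_g(ω)|. Then E[m] ≤ 2 · ∑_{(i,j): i ∈ T_f, j ∈ S \ T_f} μ({ω : the pair (i, j) is order-flipped between f and g(ω, ·)}). -/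
open MeasureTheory Classical

/-- Lemma 1 combined with linearity of expectation: the expected number of tasks that change
Top-B membership after a model update is bounded by twice the sum over cross-pairs of their
flip probabilities. -/
theorem expected_misranked_subset_bound
    {α Ω : Type*} [DecidableEq α] [MeasurableSpace Ω]
    (μ : Measure Ω) [IsProbabilityMeasure μ]
    (S : Finset α) (Bhat B : ℕ) (hS : S.card = Bhat) (hB : B ≤ Bhat)
    (f : α → ℝ) (hf : Set.InjOn f ↑S)
    (g : Ω → α → ℝ) (hg : ∀ᵐ ω ∂μ, Set.InjOn (g ω) ↑S)
    (Tf : Finset α) (hTfS : Tf ⊆ S) (hTfcard : Tf.card = B)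
    (hTfTop : ∀ i ∈ Tf, ∀ j ∈ S \ Tf, f j < f i)
    (Tg : Ω → Finset α) (hTgS : ∀ ω, Tg ω ⊆ S) (hTgcard : ∀ ω, (Tg ω).card = B)
    (hTgTop : ∀ᵐ ω ∂μ, ∀ i ∈ Tg ω, ∀ j ∈ S \ Tg ω, g ω j < g ω i)
    (m : Ω → ℕ) (hm : ∀ ω, m ω = (symmDiff Tf (Tg ω)).card) :
    ∫ ω, (m ω : ℝ) ∂μ ≤ 2 * ∑ p ∈ Tf ×ˢ (S \ Tf),
      (μ {ω | (f p.1 - f p.2 < 0 ∧ 0 ≤ g ω p.1 - g ω p.2) ∨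
              (g ω p.1 - g ω p.2 < 0 ∧ 0 ≤ f p.1 - f p.2)}).toReal := by
  classical
  set A : α × α → Set Ω := fun p => {ω | (f p.1 - f p.2 < 0 ∧ 0 ≤ g ω p.1 - g ω p.2) ∨
              (g ω p.1 - g ω p.2 < 0 ∧ 0 ≤ f p.1 - f p.2)} with hA
  set P : Finset (α × α) := Tf ×ˢ (S \ Tf) with hP
  set Am : α × α → Set Ω := fun p => MeasureTheory.toMeasurable μ (A p) with hAm
  have hAmmeas : ∀ p, MeasurableSet (Am p) := fun p => measurableSet_toMeasurable μ (A p)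
  have hAmμ : ∀ p, μ (Am p) = μ (A p) := fun p => measure_toMeasurable (A p)
  -- pointwise bound
  have key : ∀ᵐ ω ∂μ, (m ω : ENNReal) ≤ ∑ p ∈ P, 2 * (Am p).indicator 1 ω := by
    filter_upwards [hTgTop] with ω hTop
    -- cardinality facts
    have hcard : (Tf \ Tg ω).card = (Tg ω \ Tf).card := by
      have h1 := Finset.card_sdiff_add_card_inter Tf (Tg ω)
      have h2 := Finset.card_sdiff_add_card_inter (Tg ω) Tf
      have h3 := hTgcard ω
      rw [Finset.inter_comm] at h2
      omega
    have hmval : m ω = (Tf \ Tg ω).card + (Tg ω \ Tf).card := by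
      rw [hm, symmDiff_def, Finset.sup_eq_union, Finset.card_union_of_disjoint]
      exact disjoint_sdiff_sdiff
    rcases Finset.eq_empty_or_nonempty (Tg ω \ Tf) with he | ⟨j0, hj0⟩
    · have : m ω = 0 := by rw [hmval, he]; simp [hcard ▸ (he ▸ rfl : (Tg ω \ Tf).card = 0)]
      simp [this]
    · -- j0 ∈ Tg ω \ Tf
      have hj0Tg : j0 ∈ Tg ω := (Finset.mem_sdiff.mp hj0).1
      have hj0nTf : j0 ∉ Tf := (Finset.mem_sdiff.mp hj0).2
      have hj0S : j0 ∈ S := hTgS ω hj0Tg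
      have hj0SdTf : j0 ∈ S \ Tf := Finset.mem_sdiff.mpr ⟨hj0S, hj0nTf⟩
      set Q : Finset (α × α) := (Tf \ Tg ω).image (fun i => (i, j0)) with hQ
      have hQP : Q ⊆ P := by
        intro p hp
        simp only [hQ, Finset.mem_image] at hp
        obtain ⟨i, hi, rfl⟩ := hp
        have hiTf : i ∈ Tf := (Finset.mem_sdiff.mp hi).1
        exact Finset.mem_product.mpr ⟨hiTf, hj0SdTf⟩
      have hterm : ∀ p ∈ Q, (2 : ENNReal) * (Am p).indicator 1 ω = 2 := by
        intro p hp
        simp only [hQ, Finset.mem_image] at hp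
        obtain ⟨i, hi, rfl⟩ := hp
        have hiTf : i ∈ Tf := (Finset.mem_sdiff.mp hi).1
        have hinTg : i ∉ Tg ω := (Finset.mem_sdiff.mp hi).2
        have hiS : i ∈ S := hTfS hiTf
        have hωA : ω ∈ A (i, j0) := by
          have h1 : f j0 < f i := hTfTop i hiTf j0 hj0SdTf
          have h2 : g ω i < g ω j0 :=
            hTop j0 hj0Tg i (Finset.mem_sdiff.mpr ⟨hiS, hinTg⟩)
          exact Or.inr ⟨by linarith, by linarith⟩
        have : ω ∈ Am (i, j0) := subset_toMeasurable μ _ hωA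
        simp [Set.indicator_of_mem this]
      calc (m ω : ENNReal) = ∑ p ∈ Q, 2 * (Am p).indicator 1 ω := by
            have hQcard : Q.card = (Tf \ Tg ω).card := by
              rw [hQ]
              exact Finset.card_image_of_injective _ (fun a b h => (Prod.mk.injEq _ _ _ _).mp h |>.1)
            rw [Finset.sum_congr rfl hterm, Finset.sum_const, hmval, ← hcard, hQcard,
              nsmul_eq_mul]
            push_cast
            ring
        _ ≤ ∑ p ∈ P, 2 * (Am p).indicator 1 ω :=
            Finset.sum_le_sum_of_subset hQP
  -- integral bound
  have hC : ∀ p, μ (A p) ≤ 1 := fun p => prob_le_one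
  have hRHSnn : 0 ≤ 2 * ∑ p ∈ P, (μ (A p)).toReal := by positivity
  by_cases hint : Integrable (fun ω => (m ω : ℝ)) μ
  · have hnn : 0 ≤ᵐ[μ] fun ω => (m ω : ℝ) := Filter.Eventually.of_forall fun ω => Nat.cast_nonneg _
    rw [integral_eq_lintegral_of_nonneg_ae hnn hint.aestronglyMeasurable]
    have hlin : ∫⁻ ω, ENNReal.ofReal ((m ω : ℝ)) ∂μ ≤ ∑ p ∈ P, 2 * μ (A p) := by
      have h1 : ∫⁻ ω, ENNReal.ofReal ((m ω : ℝ)) ∂μ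
          ≤ ∫⁻ ω, ∑ p ∈ P, 2 * (Am p).indicator 1 ω ∂μ := by
        refine lintegral_mono_ae ?_
        filter_upwards [key] with ω hω
        rw [ENNReal.ofReal_natCast]
        exact hω
      have h2 : ∫⁻ ω, ∑ p ∈ P, 2 * (Am p).indicator 1 ω ∂μ = ∑ p ∈ P, 2 * μ (A p) := by
        rw [lintegral_finset_sum]
        · refine Finset.sum_congr rfl fun p _ => ?_
          rw [lintegral_const_mul _ ((measurable_one).indicator (hAmmeas p)),
            lintegral_indicator_one (hAmmeas p), hAmμ p]
        · exact fun p _ => (measurable_const.indicator (hAmmeas p)).const_mul 2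
      exact h1.trans_eq h2
    have hterm_fin : ∀ p : α × α, (2 : ENNReal) * μ (A p) < ⊤ :=
      fun p => ENNReal.mul_lt_top ENNReal.ofNat_lt_top ((hC p).trans_lt ENNReal.one_lt_top)
    have hfin : (∑ p ∈ P, 2 * μ (A p)) ≠ ⊤ :=
      (ENNReal.sum_lt_top.mpr fun p _ => hterm_fin p).ne
    calc (∫⁻ ω, ENNReal.ofReal ((m ω : ℝ)) ∂μ).toReal
        ≤ (∑ p ∈ P, 2 * μ (A p)).toReal := ENNReal.toReal_mono hfin hlin
      _ = 2 * ∑ p ∈ P, (μ (A p)).toReal := by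
          rw [ENNReal.toReal_sum fun p _ => (hterm_fin p).ne]
          rw [Finset.mul_sum]
          refine Finset.sum_congr rfl fun p _ => ?_
          rw [ENNReal.toReal_mul]
          norm_num
  · rw [integral_undef hint]
    exact hRHSnn
end

section
/- Let S be a finite index set of candidate tasks with |S| = B̂ and B ≤ B̂, and let P be the set of cross-pairs (of cardinality B·(B̂ − B)). Suppose for each cross-pair (i, j) ∈ P there are real random variables X_{ij} (the margin at θ_t) and Y_{ij} (the margin at θ_{t+1}) on a probability space (Ω, μ) such that |Y_{ij} − X_{ij}| ≤ 2G·d almost surely for constants G, d > 0, and μ(|X_{ij}| ≤ ε) ≤ ρ·ε for all ε > 0 with ρ > 0. If m is a random variable satisfying m ≤ 2·#{(i,j) ∈ P : X_{ij} < 0 ≤ Y_{ij} or Y_{ij} < 0 ≤ X_{ij}} pointwise, then E[m] ≤ 4ρGd·B·(B̂ − B). -/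
open MeasureTheory Classical

/-- Misranking-rate bound (Eq. (31)): combining the per-pair flip-probability bound `ρ·(2Gd)`
with the Lemma 1 bound `m ≤ 2·(number of flipped cross-pairs)` and linearity of expectation. -/
theorem misranking_rate_bound
    {α Ω : Type*} [MeasurableSpace Ω] (μ : Measure Ω) [IsProbabilityMeasure μ]
    (S : Finset α) (Bhat B : ℕ) (hS : S.card = Bhat) (hB : B ≤ Bhat)
    (P : Finset (α × α)) (hP : P.card = B * (Bhat - B))
    (X Y : α × α → Ω → ℝ) {G d ρ : ℝ} (hG : 0 < G) (hd : 0 < d) (hρ : 0 < ρ)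
    (hae : ∀ p ∈ P, ∀ᵐ ω ∂μ, |Y p ω - X p ω| ≤ 2 * G * d)
    (hanti : ∀ p ∈ P, ∀ ε : ℝ, 0 < ε → μ {ω | |X p ω| ≤ ε} ≤ ENNReal.ofReal (ρ * ε))
    (m : Ω → ℝ)
    (hm : ∀ ω, m ω ≤ 2 * ((P.filter (fun p =>
        (X p ω < 0 ∧ 0 ≤ Y p ω) ∨ (Y p ω < 0 ∧ 0 ≤ X p ω))).card : ℝ)) :
    ∫ ω, m ω ∂μ ≤ 4 * ρ * G * d * B * (Bhat - B) := by
  have hRHS : (0:ℝ) ≤ 4 * ρ * G * d * B * (Bhat - B) := by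
    have : (B:ℝ) ≤ (Bhat:ℝ) := Nat.cast_le.mpr hB
    have h1 : (0:ℝ) ≤ (Bhat:ℝ) - B := by linarith
    positivity
  by_cases hint : Integrable m μ
  · set flip : α × α → Set Ω := fun p =>
      {ω | (X p ω < 0 ∧ 0 ≤ Y p ω) ∨ (Y p ω < 0 ∧ 0 ≤ X p ω)} with hflip
    -- measure of flip event
    have hμflip : ∀ p ∈ P, μ (flip p) ≤ ENNReal.ofReal (ρ * (2 * G * d)) := by
      intro p hp
      have hsub : flip p ≤ᵐ[μ] {ω | |X p ω| ≤ 2 * G * d} := by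
        filter_upwards [hae p hp] with ω hω hmem
        rcases hmem with ⟨h1, h2⟩ | ⟨h1, h2⟩
        · have : |X p ω| = -(X p ω) := abs_of_neg h1
          show |X p ω| ≤ 2*G*d
          rw [this]
          calc -(X p ω) ≤ Y p ω - X p ω := by linarith
            _ ≤ |Y p ω - X p ω| := le_abs_self _
            _ ≤ 2 * G * d := hω
        · have : |X p ω| = X p ω := abs_of_nonneg h2
          show |X p ω| ≤ 2*G*d
          rw [this]
          calc X p ω ≤ X p ω - Y p ω := by linarith
            _ ≤ |Y p ω - X p ω| := by rw [abs_sub_comm]; exact le_abs_self _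
            _ ≤ 2 * G * d := hω
      calc μ (flip p) ≤ μ {ω | |X p ω| ≤ 2 * G * d} := measure_mono_ae hsub
        _ ≤ ENNReal.ofReal (ρ * (2 * G * d)) :=
            hanti p hp (2 * G * d) (by positivity)
    set T : α × α → Set Ω := fun p => toMeasurable μ (flip p) with hT
    have hTmeas : ∀ p, MeasurableSet (T p) := fun p => measurableSet_toMeasurable μ _
    have hμT : ∀ p ∈ P, μ (T p) ≤ ENNReal.ofReal (ρ * (2 * G * d)) := by
      intro p hp
      rw [hT]; simpa [measure_toMeasurable] using hμflip p hp
    set g : Ω → ℝ := fun ω => 2 * ∑ p ∈ P, (T p).indicator (fun _ => (1:ℝ)) ω with hg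
    have hgint : Integrable g μ := by
      apply Integrable.const_mul
      apply integrable_finset_sum
      intro p _
      exact (integrable_const (1:ℝ)).indicator (hTmeas p)
    have hmg : ∀ ω, m ω ≤ g ω := by
      intro ω
      refine (hm ω).trans ?_
      show _ ≤ 2 * ∑ p ∈ P, (T p).indicator (fun _ => (1:ℝ)) ω
      apply mul_le_mul_of_nonneg_left _ (by norm_num : (0:ℝ) ≤ 2)
      rw [Finset.card_filter]
      push_cast
      apply Finset.sum_le_sum
      intro p hp
      by_cases hc : (X p ω < 0 ∧ 0 ≤ Y p ω) ∨ (Y p ω < 0 ∧ 0 ≤ X p ω)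
      · have : ω ∈ T p := subset_toMeasurable μ (flip p) hc
        simp [hc, Set.indicator_of_mem this]
      · simp only [hc, if_false]
        exact Set.indicator_nonneg (fun _ _ => zero_le_one) ω
    have hgval : ∫ ω, g ω ∂μ ≤ 4 * ρ * G * d * B * (Bhat - B) := by
      show ∫ ω, 2 * ∑ p ∈ P, (T p).indicator (fun _ => (1:ℝ)) ω ∂μ ≤ _
      rw [integral_const_mul, integral_finset_sum _
        (fun p _ => (integrable_const (1:ℝ)).indicator (hTmeas p))]
      have hsum : ∑ p ∈ P, ∫ ω, (T p).indicator (fun _ => (1:ℝ)) ω ∂μ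
          ≤ ∑ p ∈ P, ρ * (2 * G * d) := by
        apply Finset.sum_le_sum
        intro p hp
        rw [integral_indicator_const _ (hTmeas p)]
        simp only [smul_eq_mul, mul_one]
        exact ENNReal.toReal_le_of_le_ofReal (by positivity) (hμT p hp)
      rw [Finset.sum_const, hP] at hsum
      have hcast : ((B * (Bhat - B) : ℕ) : ℝ) = (B : ℝ) * ((Bhat : ℝ) - B) := by
        push_cast [Nat.cast_sub hB]; ring
      calc 2 * ∑ p ∈ P, ∫ ω, (T p).indicator (fun _ => (1:ℝ)) ω ∂μ
          ≤ 2 * ((B * (Bhat - B) : ℕ) * (ρ * (2 * G * d))) := by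
            apply mul_le_mul_of_nonneg_left _ (by norm_num)
            simpa using hsum
        _ = 4 * ρ * G * d * B * (Bhat - B) := by rw [hcast]; ring
    exact (integral_mono hint hgint hmg).trans hgval
  · rw [integral_undef hint]; exact hRHS
end
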